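/- arXiv:1712.09925 — 3 statements merged into one kernel-verified Lean document; each statement's English description precedes it below -/
import Mathlib

section
/- For integers q, m ≥ 0 and nonnegative-integer exponents μ_1,…,μ_{m+1} with μ_1 + … + μ_{m+1} > m, the symmetrized expression Sym_{1,…,m+1} [ x_1^q · ∏_{i=1}^{m+1}(x_i−1)^{μ_i} / ((x_1−x_2)⋯(x_1−x_{m+1})) ], which is a polynomial, vanishes at the point x_1 = x_2 = … = x_{m+1} = 1. More precisely, when expanded into monomials in (x_1−1),…,(x_{m+1}−1), every monomial has total degree at least μ_1+…+μ_{m+1} − m. -/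
open Finset MvPolynomial

noncomputable section SymVanAux

variable (n : ℕ)

abbrev Rn := MvPolynomial (Fin n) ℂ

def Vd : Rn n := ∏ i : Fin n, ∏ j ∈ Finset.Ioi i, (X j - X i)

def Dk (k : Fin n) : Rn n := ∏ l ∈ Finset.univ.erase k, (X k - X l)

def Ek (k : Fin n) : Rn n :=
  ∏ i ∈ Finset.univ.erase k, ∏ j ∈ (Finset.Ioi i).erase k, (X j - X i)

def Eck (k : Fin n) : Rn n := (-1) ^ (Finset.Ioi k).card * Ek n k

def Kv : ℕ := ∑ i : Fin n, (Finset.Ioi i).card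

def ck (k : Fin n) : ℕ := ∑ i ∈ Finset.univ.erase k, ((Finset.Ioi i).erase k).card

variable {n}

lemma X_sub_X_ne_zero {a b : Fin n} (hab : a ≠ b) : (X a - X b : Rn n) ≠ 0 := by
  intro h
  have := congrArg (MvPolynomial.eval (fun i : Fin n => if i = a then (1:ℂ) else 0)) h
  simp [hab.symm] at this

lemma Dk_ne_zero (k : Fin n) : Dk n k ≠ 0 := by
  rw [Dk]
  refine Finset.prod_ne_zero_iff.2 fun l hl => X_sub_X_ne_zero ?_
  exact fun h => (Finset.mem_erase.1 hl).1 h.symm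

lemma Vd_ne_zero : Vd n ≠ 0 := by
  rw [Vd]
  refine Finset.prod_ne_zero_iff.2 fun i _ => Finset.prod_ne_zero_iff.2 fun j hj =>
    X_sub_X_ne_zero ?_
  exact fun h => absurd (Finset.mem_Ioi.1 hj) (h ▸ lt_irrefl _)

lemma erase_eq_Iio_union_Ioi (k : Fin n) :
    Finset.univ.erase k = Finset.Iio k ∪ Finset.Ioi k := by
  ext l
  simp only [Finset.mem_erase, Finset.mem_univ, and_true, Finset.mem_union, Finset.mem_Iio,
    Finset.mem_Ioi]
  exact ⟨fun h => Ne.lt_or_gt h, fun h => h.elim ne_of_lt ne_of_gt⟩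

lemma filter_erase_lt (k : Fin n) :
    (Finset.univ.erase k).filter (· < k) = Finset.Iio k := by
  ext i; simp [Finset.mem_erase]; exact fun h => ne_of_lt h

lemma Iio_disjoint_Ioi (k : Fin n) : Disjoint (Finset.Iio k) (Finset.Ioi k) := by
  simp only [Finset.disjoint_left, Finset.mem_Iio, Finset.mem_Ioi]
  exact fun {a} h1 h2 => absurd (h1.trans h2) (lt_irrefl _)

lemma split_Vd (k : Fin n) : Vd n = Dk n k * Eck n k := by
  rw [Vd, ← Finset.mul_prod_erase Finset.univ _ (Finset.mem_univ k)]
  have h1 : ∏ j ∈ Finset.Ioi k, (X j - X k : Rn n)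
      = (-1) ^ (Finset.Ioi k).card * ∏ j ∈ Finset.Ioi k, (X k - X j) := by
    rw [← Finset.prod_const (-1 : Rn n), ← Finset.prod_mul_distrib]
    exact Finset.prod_congr rfl fun j _ => by ring
  have h2 : ∀ i ∈ Finset.univ.erase k,
      (∏ j ∈ Finset.Ioi i, (X j - X i : Rn n))
        = (if i < k then (X k - X i) else 1) * ∏ j ∈ (Finset.Ioi i).erase k, (X j - X i) := by
    intro i _
    by_cases hik : i < k
    · rw [if_pos hik]; exact (Finset.mul_prod_erase (Finset.Ioi i) _ (Finset.mem_Ioi.2 hik)).symm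
    · rw [if_neg hik, one_mul, Finset.erase_eq_of_notMem (by simp [hik])]
  rw [Finset.prod_congr rfl h2, Finset.prod_mul_distrib, ← Finset.prod_filter, filter_erase_lt]
  have h4 : Dk n k = (∏ j ∈ Finset.Ioi k, (X k - X j : Rn n)) * ∏ i ∈ Finset.Iio k, (X k - X i) := by
    rw [Dk, erase_eq_Iio_union_Ioi, Finset.prod_union (Iio_disjoint_Ioi k), mul_comm]
  rw [h1, Eck, Ek, h4]
  ring

lemma card_eq (k : Fin n) : ck n k + (Finset.univ.erase k).card = Kv n := by
  have h1 : Kv n = (Finset.Ioi k).card + ∑ i ∈ Finset.univ.erase k, (Finset.Ioi i).card := by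
    rw [Kv, ← Finset.add_sum_erase Finset.univ _ (Finset.mem_univ k)]
  have h2 : ∀ i ∈ Finset.univ.erase k,
      (Finset.Ioi i).card = ((Finset.Ioi i).erase k).card + (if i < k then 1 else 0) := by
    intro i _
    by_cases hik : i < k
    · rw [if_pos hik, Finset.card_erase_add_one (Finset.mem_Ioi.2 hik)]
    · rw [if_neg hik, Finset.erase_eq_of_notMem (by simp [hik]), add_zero]
  have h4 : ∑ i ∈ Finset.univ.erase k, (Finset.Ioi i).card
      = ck n k + (Finset.Iio k).card := by
    rw [Finset.sum_congr rfl h2, Finset.sum_add_distrib, ← ck, Finset.sum_boole, filter_erase_lt]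
    simp
  have h5 : (Finset.Iio k).card + (Finset.Ioi k).card = (Finset.univ.erase k).card := by
    rw [erase_eq_Iio_union_Ioi, Finset.card_union_of_disjoint (Iio_disjoint_Ioi k)]
  omega

lemma ck_eq (k k' : Fin n) : ck n k = ck n k' := by
  have h1 := card_eq k
  have h2 := card_eq k'
  rw [Finset.card_erase_of_mem (Finset.mem_univ _), Finset.card_univ] at h1 h2
  omega

lemma Vd_homog : (Vd n).IsHomogeneous (Kv n) := by
  rw [Vd, Kv]
  refine MvPolynomial.IsHomogeneous.prod _ _ _ fun i _ => ?_
  rw [Finset.card_eq_sum_ones]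
  exact MvPolynomial.IsHomogeneous.prod _ _ _ fun j _ =>
    (MvPolynomial.isHomogeneous_X _ _).sub (MvPolynomial.isHomogeneous_X _ _)

/-! ### Rename lemmas -/

lemma rename_Vd (π : Equiv.Perm (Fin n)) :
    rename π (Vd n) = (Equiv.Perm.sign π : ℤ) * Vd n := by
  have h : Vd n = Matrix.det (Matrix.vandermonde fun i : Fin n => (X i : Rn n)) :=
    (Matrix.det_vandermonde _).symm
  rw [h]
  have := RingHom.map_det (rename (R := ℂ) π).toRingHom
      (Matrix.vandermonde fun i : Fin n => (X i : Rn n))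
  rw [show ⇑(rename (R := ℂ) π).toRingHom = ⇑(rename (R := ℂ) π) from rfl] at this
  rw [this]
  have h2 : (rename (R := ℂ) π).toRingHom.mapMatrix
        (Matrix.vandermonde fun i : Fin n => (X i : Rn n))
      = (Matrix.vandermonde fun i : Fin n => (X i : Rn n)).submatrix π id := by
    ext i j
    simp [Matrix.vandermonde_apply, Matrix.map_apply]
  rw [h2, Matrix.det_permute]

lemma rename_Dk (π : Equiv.Perm (Fin n)) (k : Fin n) :
    rename π (Dk n k) = Dk n (π k) := by
  rw [Dk, map_prod, Dk]
  refine Finset.prod_nbij' (fun l => π l) (fun l => π.symm l) ?_ ?_ ?_ ?_ ?_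
  · intro l hl
    simp only [Finset.mem_erase, Finset.mem_univ, and_true] at hl ⊢
    exact fun h => hl (π.injective h)
  · intro l hl
    simp only [Finset.mem_erase, Finset.mem_univ, and_true] at hl ⊢
    intro h; apply hl; rw [← h]; simp
  · intros; simp
  · intros; simp
  · intro l _; simp

lemma rename_Eck_swap {a b : Fin n} (hab : a ≠ b) (k : Fin n) :
    rename (Equiv.swap a b) (Eck n k) = - Eck n (Equiv.swap a b k) := by
  have h1 := congrArg (rename (R := ℂ) (Equiv.swap a b : Equiv.Perm (Fin n))) (split_Vd k)
  rw [rename_Vd, map_mul, rename_Dk, Equiv.Perm.sign_swap hab] at h1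
  have h2 := split_Vd (n := n) (Equiv.swap a b k)
  apply mul_left_cancel₀ (Dk_ne_zero (Equiv.swap a b k))
  rw [← h1, h2]
  push_cast
  ring

/-! ### Collapse maps, primality, divisibility -/

variable (n) in
def collapse (a b : Fin n) : Rn n →ₐ[ℂ] Rn n :=
  aeval (fun i => if i = b then X a else X i)

lemma collapse_X (a b i : Fin n) :
    collapse n a b (X i) = if i = b then X a else X i := by simp [collapse]

lemma dvd_sub_collapse (a b : Fin n) (P : Rn n) :
    (X a - X b) ∣ P - collapse n a b P := by
  induction P using MvPolynomial.induction_on with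
  | C r => simp [collapse]
  | add p q hp hq =>
      rw [map_add, show p + q - (collapse n a b p + collapse n a b q)
        = (p - collapse n a b p) + (q - collapse n a b q) by ring]
      exact dvd_add hp hq
  | mul_X p i hp =>
      rw [map_mul, collapse_X, show p * X i - collapse n a b p * (if i = b then X a else X i)
        = (p - collapse n a b p) * X i
          + collapse n a b p * (X i - (if i = b then X a else X i)) by ring]
      refine dvd_add (Dvd.dvd.mul_right hp _) (Dvd.dvd.mul_left ?_ _)
      by_cases hib : i = b
      · rw [if_pos hib, hib, show (X b - X a : Rn n) = -(X a - X b) by ring]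
        exact (dvd_neg).2 dvd_rfl
      · rw [if_neg hib, sub_self]
        exact dvd_zero _

lemma collapse_X_sub_X (a b : Fin n) : collapse n a b (X a - X b) = 0 := by
  rw [map_sub, collapse_X, collapse_X, if_pos rfl]
  by_cases hab : a = b <;> simp [hab]

lemma collapse_X_sub_X' (a b : Fin n) : collapse n a b (X b - X a) = 0 := by
  rw [map_sub, collapse_X, collapse_X, if_pos rfl]
  by_cases hab : a = b <;> simp [hab]

lemma dvd_of_collapse_eq_zero {a b : Fin n} {P : Rn n} (h : collapse n a b P = 0) :
    (X a - X b) ∣ P := by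
  have := dvd_sub_collapse a b P
  rwa [h, sub_zero] at this

lemma collapse_eq_zero_of_dvd {a b : Fin n} {P : Rn n} (h : (X a - X b) ∣ P) :
    collapse n a b P = 0 := by
  obtain ⟨c, rfl⟩ := h
  rw [map_mul, collapse_X_sub_X, zero_mul]

lemma prime_X_sub_X {a b : Fin n} (hab : a ≠ b) : Prime (X a - X b : Rn n) := by
  refine ⟨X_sub_X_ne_zero hab, ?_, ?_⟩
  · intro h
    have := (h.map (collapse n a b)).ne_zero
    exact this (collapse_X_sub_X a b)
  · intro x y hxy
    have h0 : collapse n a b x * collapse n a b y = 0 := by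
      rw [← map_mul]; exact collapse_eq_zero_of_dvd hxy
    rcases mul_eq_zero.1 h0 with h | h
    · exact Or.inl (dvd_of_collapse_eq_zero h)
    · exact Or.inr (dvd_of_collapse_eq_zero h)

lemma prod_dvd_of_prime {β : Type*} [DecidableEq β] {M : Type*} [CommMonoidWithZero M] [IsCancelMulZero M]
    (s : Finset β) (f : β → M)
    (hp : ∀ b ∈ s, Prime (f b)) (hnd : ∀ b ∈ s, ∀ c ∈ s, b ≠ c → ¬ f b ∣ f c) :
    ∀ A : M, (∀ b ∈ s, f b ∣ A) → (∏ b ∈ s, f b) ∣ A := by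
  induction s using Finset.induction_on with
  | empty => simp
  | @insert a s ha ih =>
      intro A hd
      obtain ⟨B, rfl⟩ := hd a (Finset.mem_insert_self a s)
      rw [Finset.prod_insert ha]
      refine mul_dvd_mul_left _ (ih (fun b hb => hp b (Finset.mem_insert_of_mem hb))
        (fun b hb c hc => hnd b (Finset.mem_insert_of_mem hb) c (Finset.mem_insert_of_mem hc))
        B fun b hb => ?_)
      have hbA := hd b (Finset.mem_insert_of_mem hb)
      refine ((hp b (Finset.mem_insert_of_mem hb)).dvd_or_dvd hbA).resolve_left ?_
      exact hnd b (Finset.mem_insert_of_mem hb) a (Finset.mem_insert_self a s)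
        (fun h => ha (h ▸ hb))

lemma not_dvd_pairs {i j i' j' : Fin n} (hij : i < j) (hij' : i' < j')
    (hne : ¬ (i = i' ∧ j = j')) : ¬ ((X j - X i : Rn n) ∣ (X j' - X i')) := by
  intro hdvd
  have h0 : collapse n i j (X j' - X i') = 0 := by
    obtain ⟨c, hc⟩ := hdvd
    rw [hc, map_mul, collapse_X_sub_X', zero_mul]
  rw [map_sub, collapse_X, collapse_X, sub_eq_zero] at h0
  by_cases h1 : j' = j
  · rw [if_pos h1] at h0
    by_cases h2 : i' = j
    · have h3 : i' < j' := hij'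
      rw [h1, h2] at h3
      exact lt_irrefl _ h3
    · rw [if_neg h2] at h0
      exact hne ⟨MvPolynomial.X_injective h0, h1.symm⟩
  · rw [if_neg h1] at h0
    by_cases h2 : i' = j
    · rw [if_pos h2] at h0
      have hj : j' = i := MvPolynomial.X_injective h0
      have h3 : i' < j' := hij'
      rw [h2, hj] at h3
      exact lt_irrefl _ (h3.trans hij)
    · rw [if_neg h2] at h0
      have h3 : j' = i' := MvPolynomial.X_injective h0
      rw [h3] at hij'
      exact lt_irrefl _ hij'

lemma Vd_dvd {A : Rn n} (h : ∀ a b : Fin n, a ≠ b → collapse n a b A = 0) : Vd n ∣ A := by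
  have hV : Vd n = ∏ x ∈ Finset.univ.sigma fun i : Fin n => Finset.Ioi i,
      (X x.2 - X x.1 : Rn n) := by
    rw [Vd, Finset.prod_sigma]
  rw [hV]
  refine prod_dvd_of_prime _ _ ?_ ?_ A ?_
  · intro x hx
    have := (Finset.mem_sigma.1 hx).2
    exact prime_X_sub_X (ne_of_gt (Finset.mem_Ioi.1 this))
  · intro b hb c hc hbc
    have hb2 := Finset.mem_Ioi.1 (Finset.mem_sigma.1 hb).2
    have hc2 := Finset.mem_Ioi.1 (Finset.mem_sigma.1 hc).2
    exact not_dvd_pairs hb2 hc2 fun ⟨h1, h2⟩ => hbc (Sigma.ext h1 (heq_of_eq h2))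
  · intro x hx
    have hx2 := Finset.mem_Ioi.1 (Finset.mem_sigma.1 hx).2
    exact dvd_of_collapse_eq_zero (h x.2 x.1 (ne_of_gt hx2))

/-! ### Minimal degree machinery -/

def MinDeg (P : Rn n) (D : ℕ) : Prop := ∀ d ∈ P.support, D ≤ d.sum fun _ e => e

lemma finsupp_deg_eq (d : Fin n →₀ ℕ) : d.degree = d.sum fun _ e => e := rfl

lemma minDeg_zero (P : Rn n) : MinDeg P 0 := fun _ _ => Nat.zero_le _

lemma minDeg_mul {P Q : Rn n} {Dp Dq : ℕ} (hP : MinDeg P Dp) (hQ : MinDeg Q Dq) :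
    MinDeg (P * Q) (Dp + Dq) := by
  intro d hd
  obtain ⟨a, ha, b, hb, rfl⟩ := Finset.mem_add.1 (MvPolynomial.support_mul P Q hd)
  rw [Finsupp.sum_add_index' (fun _ => rfl) (fun _ _ _ => rfl)]
  exact Nat.add_le_add (hP a ha) (hQ b hb)

lemma minDeg_pow {P : Rn n} {D : ℕ} (hP : MinDeg P D) (e : ℕ) : MinDeg (P ^ e) (e * D) := by
  induction e with
  | zero => simpa using minDeg_zero _
  | succ e ih =>
      rw [pow_succ, Nat.succ_mul]
      exact minDeg_mul ih hP

lemma minDeg_prod {β : Type*} (s : Finset β) (f : β → Rn n) (c : β → ℕ)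
    (h : ∀ b ∈ s, MinDeg (f b) (c b)) : MinDeg (∏ b ∈ s, f b) (∑ b ∈ s, c b) := by
  classical
  induction s using Finset.induction_on with
  | empty => simpa using minDeg_zero _
  | @insert a s ha ih =>
      rw [Finset.prod_insert ha, Finset.sum_insert ha]
      exact minDeg_mul (h a (Finset.mem_insert_self a s))
        (ih fun b hb => h b (Finset.mem_insert_of_mem hb))

lemma minDeg_sum {β : Type*} (s : Finset β) (f : β → Rn n) (D : ℕ)
    (h : ∀ b ∈ s, MinDeg (f b) D) : MinDeg (∑ b ∈ s, f b) D := by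
  intro d hd
  rw [MvPolynomial.mem_support_iff] at hd
  have : ∃ b ∈ s, MvPolynomial.coeff d (f b) ≠ 0 := by
    by_contra hc
    push_neg at hc
    rw [MvPolynomial.coeff_sum] at hd
    exact hd (Finset.sum_eq_zero hc)
  obtain ⟨b, hb, hcb⟩ := this
  exact h b hb d (MvPolynomial.mem_support_iff.2 hcb)

lemma minDeg_X (i : Fin n) : MinDeg (X i : Rn n) 1 := by
  intro d hd
  rw [MvPolynomial.support_X, Finset.mem_singleton] at hd
  subst hd
  rw [Finsupp.sum_single_index rfl]

lemma minDeg_sub {P Q : Rn n} {D : ℕ} (hP : MinDeg P D) (hQ : MinDeg Q D) :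
    MinDeg (P - Q) D := by
  intro d hd
  rw [MvPolynomial.mem_support_iff, MvPolynomial.coeff_sub] at hd
  by_cases h1 : MvPolynomial.coeff d P ≠ 0
  · exact hP d (MvPolynomial.mem_support_iff.2 h1)
  · push_neg at h1
    rw [h1, zero_sub, neg_ne_zero] at hd
    exact hQ d (MvPolynomial.mem_support_iff.2 hd)

lemma minDeg_of_homog {P : Rn n} {D : ℕ} (h : P.IsHomogeneous D) : MinDeg P D := by
  intro d hd
  rw [MvPolynomial.mem_support_iff] at hd
  have h2 := h hd
  rw [← finsupp_deg_eq, Finsupp.degree_eq_weight_one]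
  exact h2.ge

lemma minDeg_Ek (k : Fin n) : MinDeg (Ek n k) (ck n k) := by
  rw [Ek, ck]
  refine minDeg_prod _ _ _ fun i _ => ?_
  rw [Finset.card_eq_sum_ones]
  refine minDeg_prod _ _ _ fun j hj => ?_
  exact minDeg_sub (minDeg_X _) (minDeg_X _)

lemma minDeg_Eck (k : Fin n) : MinDeg (Eck n k) (ck n k) := by
  rw [Eck, show ck n k = 0 + ck n k from (Nat.zero_add _).symm]
  exact minDeg_mul (minDeg_zero _) (minDeg_Ek k)

lemma minDeg_of_eq_mul {V A Q' : Rn n} {K b : ℕ} (hhom : V.IsHomogeneous K) (hV : V ≠ 0)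
    (hA : MinDeg A b) (hEq : A = V * Q') :
    ∀ d ∈ Q'.support, b ≤ K + d.sum fun _ e => e := by
  intro d0 hd0
  have hTne : (Q'.support.image fun d => d.sum fun _ e => e).Nonempty :=
    ⟨_, Finset.mem_image_of_mem _ hd0⟩
  set t := (Q'.support.image fun d => d.sum fun _ e => e).min' hTne with ht
  have ht_le : ∀ d ∈ Q'.support, t ≤ d.sum fun _ e => e := fun d hd =>
    Finset.min'_le _ _ (Finset.mem_image_of_mem _ hd)
  obtain ⟨dmin, hdmin, hdeg⟩ := Finset.mem_image.1 (Finset.min'_mem _ hTne)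
  set Qt := MvPolynomial.homogeneousComponent t Q' with hQt
  have hcoeffQt : ∀ d, MvPolynomial.coeff d Qt
      = if d.degree = t then MvPolynomial.coeff d Q' else 0 := fun d =>
    MvPolynomial.coeff_homogeneousComponent ..
  have hQtne : Qt ≠ 0 := by
    intro h
    have := hcoeffQt dmin
    rw [h, MvPolynomial.coeff_zero, finsupp_deg_eq, hdeg, if_pos rfl] at this
    exact (MvPolynomial.mem_support_iff.1 hdmin) this.symm
  have hVQt : (V * Qt).IsHomogeneous (K + t) :=
    hhom.mul (MvPolynomial.homogeneousComponent_isHomogeneous t Q')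
  obtain ⟨e, he⟩ := MvPolynomial.support_nonempty.2 (mul_ne_zero hV hQtne)
  have he_deg : (e.sum fun _ el => el) = K + t := by
    rw [← finsupp_deg_eq, Finsupp.degree_eq_weight_one]
    exact hVQt (MvPolynomial.mem_support_iff.1 he)
  have hrest : MinDeg (V * (Q' - Qt)) (K + (t + 1)) := by
    refine minDeg_mul (minDeg_of_homog hhom) ?_
    intro d hd
    rw [MvPolynomial.mem_support_iff, MvPolynomial.coeff_sub, hcoeffQt] at hd
    by_cases hdt : d.degree = t
    · rw [if_pos hdt, sub_self] at hd; exact absurd rfl hd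
    · rw [if_neg hdt, sub_zero] at hd
      have := ht_le d (MvPolynomial.mem_support_iff.2 hd)
      rw [← finsupp_deg_eq] at this ⊢
      omega
  have hsplit : A = V * Qt + V * (Q' - Qt) := by rw [hEq]; ring
  have hcoeffA : MvPolynomial.coeff e A ≠ 0 := by
    rw [hsplit, MvPolynomial.coeff_add]
    have h2 : MvPolynomial.coeff e (V * (Q' - Qt)) = 0 := by
      by_contra hc
      have := hrest e (MvPolynomial.mem_support_iff.2 hc)
      omega
    rw [h2, add_zero]
    exact MvPolynomial.mem_support_iff.1 he
  have hbA := hA e (MvPolynomial.mem_support_iff.2 hcoeffA)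
  have := ht_le d0 hd0
  omega

end SymVanAux

/-! ### The symmetrized polynomial -/

noncomputable section SymVanMain

def termP (m q : ℕ) (μ : Fin (m + 1) → ℕ) (σ : Equiv.Perm (Fin (m + 1))) : Rn (m + 1) :=
  (X (σ 0) + 1) ^ q * (∏ i, X (σ i) ^ μ i) * Eck (m + 1) (σ 0)

def AP (m q : ℕ) (μ : Fin (m + 1) → ℕ) : Rn (m + 1) :=
  ∑ σ : Equiv.Perm (Fin (m + 1)), termP m q μ σ

lemma rename_termP (m q : ℕ) (μ : Fin (m + 1) → ℕ) {a b : Fin (m + 1)} (hab : a ≠ b)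
    (σ : Equiv.Perm (Fin (m + 1))) :
    rename (Equiv.swap a b) (termP m q μ σ) = - termP m q μ (Equiv.swap a b * σ) := by
  rw [termP, map_mul, map_mul, map_pow, map_add, rename_X, map_one, map_prod,
    rename_Eck_swap hab]
  rw [termP]
  simp only [Equiv.Perm.mul_apply, map_pow, rename_X]
  ring

lemma collapse_rename_swap {n : ℕ} {a b : Fin n} (hab : a ≠ b) (P : Rn n) :
    collapse n a b (rename (Equiv.swap a b) P) = collapse n a b P := by
  have : (collapse n a b).comp
      ((rename (Equiv.swap a b : Equiv.Perm (Fin n)) : Rn n →ₐ[ℂ] Rn n)) = collapse n a b := by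
    apply MvPolynomial.algHom_ext
    intro i
    simp only [AlgHom.comp_apply, rename_X, collapse_X]
    rcases Equiv.swap_apply_def a b i with _
    by_cases hia : i = a
    · subst hia
      rw [Equiv.swap_apply_left, if_pos rfl, if_neg hab]
    · by_cases hib : i = b
      · subst hib
        rw [Equiv.swap_apply_right, if_pos rfl, if_neg hab]
      · rw [Equiv.swap_apply_of_ne_of_ne hia hib]
  exact AlgHom.congr_fun this P

lemma collapse_AP (m q : ℕ) (μ : Fin (m + 1) → ℕ) {a b : Fin (m + 1)} (hab : a ≠ b) :
    collapse (m + 1) a b (AP m q μ) = 0 := by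
  have key : ∀ σ : Equiv.Perm (Fin (m + 1)),
      collapse (m + 1) a b (termP m q μ (Equiv.swap a b * σ))
        = - collapse (m + 1) a b (termP m q μ σ) := by
    intro σ
    rw [show termP m q μ (Equiv.swap a b * σ) = - rename (Equiv.swap a b) (termP m q μ σ) by
      rw [rename_termP m q μ hab σ, neg_neg], map_neg, collapse_rename_swap hab]
  have h1 : collapse (m + 1) a b (AP m q μ)
      = ∑ σ : Equiv.Perm (Fin (m + 1)), collapse (m + 1) a b (termP m q μ σ) := by
    rw [AP, map_sum]
  have h2 : ∑ σ : Equiv.Perm (Fin (m + 1)), collapse (m + 1) a b (termP m q μ σ)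
      = ∑ σ : Equiv.Perm (Fin (m + 1)),
          collapse (m + 1) a b (termP m q μ (Equiv.swap a b * σ)) :=
    (Fintype.sum_equiv (Equiv.mulLeft (Equiv.swap a b))
      (fun σ => collapse (m + 1) a b (termP m q μ (Equiv.swap a b * σ)))
      (fun σ => collapse (m + 1) a b (termP m q μ σ)) fun σ => rfl).symm
  have h3 : collapse (m + 1) a b (AP m q μ) = - collapse (m + 1) a b (AP m q μ) := by
    conv_lhs => rw [h1, h2]
    simp_rw [key]
    rw [h1, Finset.sum_neg_distrib]
  have h4 : (2 : Rn (m + 1)) * collapse (m + 1) a b (AP m q μ) = 0 := by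
    rw [two_mul]
    nth_rewrite 1 [h3]
    ring
  rcases mul_eq_zero.1 h4 with h | h
  · exact absurd h two_ne_zero
  · exact h

lemma minDeg_AP (m q : ℕ) (μ : Fin (m + 1) → ℕ) :
    MinDeg (AP m q μ) ((∑ i, μ i) + ck (m + 1) 0) := by
  rw [AP]
  refine minDeg_sum _ _ _ fun σ _ => ?_
  rw [termP, show (∑ i, μ i) + ck (m + 1) 0 = (0 + ∑ i, μ i) + ck (m + 1) (σ 0) by
    rw [Nat.zero_add, ck_eq (σ 0) 0]]
  refine minDeg_mul (minDeg_mul (minDeg_zero _) ?_) (minDeg_Eck _)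
  refine minDeg_prod _ _ _ fun i _ => ?_
  have := minDeg_pow (minDeg_X (σ i)) (μ i)
  rwa [mul_one] at this

end SymVanMain

open Finset

/-- If `μ₁ + … + μ_{m+1} > m`, the symmetrization of
`x₁^q ∏_i (x_i − 1)^{μ_i} / ((x₁−x₂)⋯(x₁−x_{m+1}))` — a polynomial — vanishes at
`x₁ = … = x_{m+1} = 1`; more precisely, expanded into monomials in the variables
`(x_i − 1)`, every monomial has total degree at least `μ₁+…+μ_{m+1} − m`. -/
theorem symmetrization_vanishing (m q : ℕ) (μ : Fin (m + 1) → ℕ)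
    (hμ : m < ∑ i, μ i) :
    ∃ Q : MvPolynomial (Fin (m + 1)) ℂ,
      (∀ x : Fin (m + 1) → ℂ, Function.Injective x →
        (∑ σ : Equiv.Perm (Fin (m + 1)),
          (x (σ 0)) ^ q * (∏ i, (x (σ i) - 1) ^ μ i) /
            ∏ j ∈ Finset.univ.erase 0, (x (σ 0) - x (σ j)))
          = MvPolynomial.eval (fun i => x i - 1) Q) ∧
      (∀ d ∈ Q.support, (∑ i, μ i) - m ≤ d.sum fun _ e => e) ∧
      MvPolynomial.coeff 0 Q = 0 := by
  classical
  obtain ⟨Q, hQ⟩ : Vd (m + 1) ∣ AP m q μ :=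
    Vd_dvd fun a b hab => collapse_AP m q μ hab
  have hsupp : ∀ d ∈ Q.support, (∑ i, μ i) - m ≤ d.sum fun _ e => e := by
    intro d hd
    have h1 := minDeg_of_eq_mul Vd_homog Vd_ne_zero (minDeg_AP m q μ) hQ d hd
    have h2 := card_eq (n := m + 1) 0
    rw [Finset.card_erase_of_mem (Finset.mem_univ _), Finset.card_univ, Fintype.card_fin] at h2
    omega
  refine ⟨Q, ?_, hsupp, ?_⟩
  · intro x hx
    set y : Fin (m + 1) → ℂ := fun i => x i - 1 with hy
    have hyinj : Function.Injective y := by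
      intro i j h
      apply hx
      have : x i - 1 = x j - 1 := h
      linear_combination this
    have hVne : MvPolynomial.eval y (Vd (m + 1)) ≠ 0 := by
      rw [Vd, map_prod]
      refine Finset.prod_ne_zero_iff.2 fun i _ => ?_
      rw [map_prod]
      refine Finset.prod_ne_zero_iff.2 fun j hj => ?_
      rw [map_sub, MvPolynomial.eval_X, MvPolynomial.eval_X]
      exact sub_ne_zero.2 fun h =>
        absurd (Finset.mem_Ioi.1 hj) ((hyinj h) ▸ lt_irrefl _)
    have hterm : ∀ σ : Equiv.Perm (Fin (m + 1)),
        (x (σ 0)) ^ q * (∏ i, (x (σ i) - 1) ^ μ i) /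
            ∏ j ∈ Finset.univ.erase 0, (x (σ 0) - x (σ j))
          = MvPolynomial.eval y (termP m q μ σ) / MvPolynomial.eval y (Vd (m + 1)) := by
      intro σ
      have hsplit := congrArg (MvPolynomial.eval y) (split_Vd (n := m + 1) (σ 0))
      rw [map_mul] at hsplit
      have hDne : MvPolynomial.eval y (Dk (m + 1) (σ 0)) ≠ 0 :=
        fun h => hVne (by rw [hsplit, h, zero_mul])
      have hEne : MvPolynomial.eval y (Eck (m + 1) (σ 0)) ≠ 0 :=
        fun h => hVne (by rw [hsplit, h, mul_zero])
      have hnum : MvPolynomial.eval y ((X (σ 0) + 1) ^ q * ∏ i, X (σ i) ^ μ i : Rn (m + 1))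
          = (x (σ 0)) ^ q * ∏ i, (x (σ i) - 1) ^ μ i := by
        rw [map_mul, map_pow, map_add, MvPolynomial.eval_X, map_one, map_prod]
        simp_rw [map_pow, MvPolynomial.eval_X]
        congr 1
        · congr 1
          rw [hy]
          ring
      have hden : ∏ j ∈ Finset.univ.erase 0, (x (σ 0) - x (σ j))
          = MvPolynomial.eval y (Dk (m + 1) (σ 0)) := by
        rw [Dk, map_prod]
        simp_rw [map_sub, MvPolynomial.eval_X]
        refine Finset.prod_nbij' (fun j => σ j) (fun l => σ.symm l) ?_ ?_ ?_ ?_ ?_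
        · intro l hl
          simp only [Finset.mem_erase, Finset.mem_univ, and_true] at hl ⊢
          exact fun h => hl (σ.injective h)
        · intro l hl
          simp only [Finset.mem_erase, Finset.mem_univ, and_true] at hl ⊢
          intro h; apply hl; rw [← h]; simp
        · intros; simp
        · intros; simp
        · intro l _
          rw [hy]
          ring
      have htermval : MvPolynomial.eval y (termP m q μ σ)
          = (x (σ 0) ^ q * ∏ i, (x (σ i) - 1) ^ μ i)
            * MvPolynomial.eval y (Eck (m + 1) (σ 0)) := by
        rw [termP, map_mul, hnum]
      rw [htermval, hden, hsplit]
      field_simp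
    rw [Finset.sum_congr rfl fun σ _ => hterm σ, ← Finset.sum_div]
    rw [show (∑ σ : Equiv.Perm (Fin (m + 1)), MvPolynomial.eval y (termP m q μ σ))
      = MvPolynomial.eval y (AP m q μ) by rw [AP, map_sum]]
    rw [hQ, map_mul, mul_div_cancel_left₀ _ hVne]
  · by_contra h
    have h0 : (0 : Fin (m + 1) →₀ ℕ) ∈ Q.support := MvPolynomial.mem_support_iff.2 h
    have := hsupp 0 h0
    rw [Finsupp.sum_zero_index] at this
    omega
end

section
/- For a function f of the form f(z) = (1+z)(1/z + Σ_{a=1}^∞ c_a z^{a-1}/(a−1)!) with the series convergent near 0 and c_a real, the map from the sequence (p(k))_{k≥1} defined by p(k) = [z^{-1}] (1/((k+1)(1+z))) · f(z)^{k+1} to the sequence (c_a) is invertible: Σ_{a=1}^∞ c_a z^{a-1}/(a−1)! = (1/(1+z)) · G^{(-1)}(u)|_{u = log(1+z)} − 1/z, where G(u) = Σ_{k=0}^∞ p(k)/u^{k+1} with p(0) = 1 and G^{(-1)} is the compositional (functional) inverse of the power series G. -/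
open PowerSeries

/-- Composition ("substitution") of formal power series: `(psComp f g)` is
`f(g)` (intended for `g` with vanishing constant term). -/
noncomputable def psComp (f g : PowerSeries ℝ) : PowerSeries ℝ :=
  PowerSeries.mk fun n =>
    ∑ k ∈ Finset.range (n + 1),
      (PowerSeries.coeff k f) * PowerSeries.coeff n (g ^ k)

/-- The formal power series of `log(1+z)`. -/
noncomputable def logOnePlus : PowerSeries ℝ :=
  PowerSeries.mk fun n => if n = 0 then 0 else (-1 : ℝ) ^ (n + 1) / n

namespace LagAux

lemma coeff_pow_mul_eq_zero {h B : PowerSeries ℝ} (h0 : constantCoeff h = 0)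
    {k n : ℕ} (hn : n < k) : PowerSeries.coeff n (h ^ k * B) = 0 := by
  have hd : (PowerSeries.X : PowerSeries ℝ) ^ k ∣ h ^ k * B :=
    Dvd.dvd.mul_right (pow_dvd_pow_of_dvd (PowerSeries.X_dvd_iff.mpr h0) k) B
  exact (PowerSeries.X_pow_dvd_iff.mp hd) n hn

lemma coeff_aeval_mul {h : PowerSeries ℝ} (h0 : constantCoeff h = 0)
    (B : PowerSeries ℝ) (P : Polynomial ℝ) (n : ℕ) :
    PowerSeries.coeff n (Polynomial.aeval h P * B) =
      ∑ k ∈ Finset.range (n + 1), P.coeff k * PowerSeries.coeff n (h ^ k * B) := by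
  rw [Polynomial.aeval_eq_sum_range, Finset.sum_mul, map_sum]
  have step : ∀ i, PowerSeries.coeff n (P.coeff i • h ^ i * B)
      = P.coeff i * PowerSeries.coeff n (h ^ i * B) := by
    intro i; rw [smul_mul_assoc, map_smul, smul_eq_mul]
  rw [Finset.sum_congr rfl fun i _ => step i]
  have e1 : ∑ k ∈ Finset.range (P.natDegree + 1), P.coeff k * PowerSeries.coeff n (h ^ k * B)
      = ∑ k ∈ Finset.range (max (P.natDegree + 1) (n + 1)),
          P.coeff k * PowerSeries.coeff n (h ^ k * B) := by
    apply Finset.sum_subset (Finset.range_subset_range.mpr (le_max_left _ _))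
    intro x _ hx
    rw [Polynomial.coeff_eq_zero_of_natDegree_lt (by simpa using hx), zero_mul]
  have e2 : ∑ k ∈ Finset.range (n + 1), P.coeff k * PowerSeries.coeff n (h ^ k * B)
      = ∑ k ∈ Finset.range (max (P.natDegree + 1) (n + 1)),
          P.coeff k * PowerSeries.coeff n (h ^ k * B) := by
    apply Finset.sum_subset (Finset.range_subset_range.mpr (le_max_right _ _))
    intro x _ hx
    rw [coeff_pow_mul_eq_zero h0 (by simpa using hx), mul_zero]
  rw [e1, e2]

lemma coeff_mul_congr {f f' B : PowerSeries ℝ} {n : ℕ}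
    (hf : ∀ m ≤ n, PowerSeries.coeff m f = PowerSeries.coeff m f') :
    PowerSeries.coeff n (f * B) = PowerSeries.coeff n (f' * B) := by
  rw [PowerSeries.coeff_mul, PowerSeries.coeff_mul]
  refine Finset.sum_congr rfl fun p hp => ?_
  have := Finset.HasAntidiagonal.antidiagonal.fst_le hp
  rw [hf p.1 this]

end LagAux

namespace LagAux

lemma psComp_aeval {h : PowerSeries ℝ} (h0 : constantCoeff h = 0)
    (f : PowerSeries ℝ) {n N : ℕ} (hn : n < N) :
    PowerSeries.coeff n (psComp f h) =
      PowerSeries.coeff n (Polynomial.aeval h (PowerSeries.trunc N f)) := by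
  rw [psComp, PowerSeries.coeff_mk, ← mul_one (Polynomial.aeval h (PowerSeries.trunc N f)),
    coeff_aeval_mul h0 1 _ n]
  refine Finset.sum_congr rfl fun k hk => ?_
  rw [PowerSeries.coeff_trunc, mul_one, if_pos (by simp only [Finset.mem_range] at hk; omega)]

/-- Key lemma: coefficient of `psComp f h * B`. -/
lemma coeff_psComp_mul {h : PowerSeries ℝ} (h0 : constantCoeff h = 0)
    (f B : PowerSeries ℝ) (n : ℕ) :
    PowerSeries.coeff n (psComp f h * B) =
      ∑ k ∈ Finset.range (n + 1),
        PowerSeries.coeff k f * PowerSeries.coeff n (h ^ k * B) := by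
  have congr1 : PowerSeries.coeff n (psComp f h * B)
      = PowerSeries.coeff n (Polynomial.aeval h (PowerSeries.trunc (n + 1) f) * B) := by
    exact coeff_mul_congr fun m hm => psComp_aeval h0 f (by omega)
  rw [congr1, coeff_aeval_mul h0 B (PowerSeries.trunc (n + 1) f) n]
  refine Finset.sum_congr rfl fun k hk => ?_
  rw [PowerSeries.coeff_trunc, if_pos (by simp only [Finset.mem_range] at hk; omega)]

lemma coeff_psComp {h : PowerSeries ℝ} (h0 : constantCoeff h = 0)
    (f : PowerSeries ℝ) (n : ℕ) :
    PowerSeries.coeff n (psComp f h) =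
      ∑ k ∈ Finset.range (n + 1),
        PowerSeries.coeff k f * PowerSeries.coeff n (h ^ k) := by
  rw [psComp, PowerSeries.coeff_mk]

lemma coeff_zero_psComp (f h : PowerSeries ℝ) :
    PowerSeries.coeff 0 (psComp f h) = PowerSeries.coeff 0 f := by
  rw [psComp, PowerSeries.coeff_mk, Finset.sum_range_one, pow_zero]
  simp


lemma coeff_aeval_congr {h : PowerSeries ℝ} (h0 : constantCoeff h = 0)
    {P Q : Polynomial ℝ} {n : ℕ} (hPQ : ∀ m ≤ n, P.coeff m = Q.coeff m) :
    PowerSeries.coeff n (Polynomial.aeval h P) =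
      PowerSeries.coeff n (Polynomial.aeval h Q) := by
  rw [← mul_one (Polynomial.aeval h P), ← mul_one (Polynomial.aeval h Q),
    coeff_aeval_mul h0 1 P n, coeff_aeval_mul h0 1 Q n]
  refine Finset.sum_congr rfl fun k hk => ?_
  rw [hPQ k (by simp only [Finset.mem_range] at hk; omega)]

lemma psComp_mul {h : PowerSeries ℝ} (h0 : constantCoeff h = 0) (a b : PowerSeries ℝ) :
    psComp (a * b) h = psComp a h * psComp b h := by
  ext n
  have h1 : PowerSeries.coeff n (psComp a h * psComp b h)
      = PowerSeries.coeff n (Polynomial.aeval h (PowerSeries.trunc (n+1) a) * psComp b h) :=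
    coeff_mul_congr (fun m hm => psComp_aeval h0 a (by omega))
  have h2 : PowerSeries.coeff n
        (Polynomial.aeval h (PowerSeries.trunc (n+1) a) * psComp b h)
      = PowerSeries.coeff n (Polynomial.aeval h (PowerSeries.trunc (n+1) a) *
          Polynomial.aeval h (PowerSeries.trunc (n+1) b)) := by
    rw [mul_comm, mul_comm (Polynomial.aeval h (PowerSeries.trunc (n+1) a))]
    exact coeff_mul_congr (fun m hm => psComp_aeval h0 b (by omega))
  rw [h1, h2, ← map_mul, psComp_aeval h0 (a*b) (Nat.lt_succ_self n)]
  apply coeff_aeval_congr h0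
  intro m hm
  rw [PowerSeries.coeff_trunc, if_pos (by omega), Polynomial.coeff_mul, PowerSeries.coeff_mul]
  refine Finset.sum_congr rfl fun p hp => ?_
  have ha1 := Finset.HasAntidiagonal.antidiagonal.fst_le hp
  have ha2 := Finset.HasAntidiagonal.antidiagonal.snd_le hp
  rw [PowerSeries.coeff_trunc, PowerSeries.coeff_trunc, if_pos (by omega), if_pos (by omega)]

lemma psComp_one (h : PowerSeries ℝ) : psComp 1 h = 1 := by
  ext n
  rw [psComp, PowerSeries.coeff_mk]
  rw [Finset.sum_eq_single 0]
  · simp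
  · intro k hk hk0
    rw [PowerSeries.coeff_one, if_neg hk0, zero_mul]
  · intro hn
    simp at hn

lemma psComp_add (a b h : PowerSeries ℝ) : psComp (a + b) h = psComp a h + psComp b h := by
  ext n
  simp only [psComp, PowerSeries.coeff_mk, map_add, add_mul, Finset.sum_add_distrib]

lemma psComp_C (r : ℝ) (h : PowerSeries ℝ) : psComp (PowerSeries.C r) h = PowerSeries.C r := by
  ext n
  rw [psComp, PowerSeries.coeff_mk, Finset.sum_eq_single 0]
  · simp [PowerSeries.coeff_C]
  · intro k hk hk0
    rw [PowerSeries.coeff_C, if_neg hk0, zero_mul]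
  · intro hn; simp at hn

lemma psComp_X {h : PowerSeries ℝ} (h0 : constantCoeff h = 0) : psComp X h = h := by
  ext n
  rw [psComp, PowerSeries.coeff_mk]
  cases n with
  | zero =>
    rw [Finset.sum_range_one]
    simp [h0]
  | succ m =>
    rw [Finset.sum_eq_single 1]
    · simp
    · intro k hk hk1
      rw [PowerSeries.coeff_X, if_neg hk1, zero_mul]
    · intro hn; simp at hn

end LagAux

namespace LagAux

lemma psComp_zero (h : PowerSeries ℝ) : psComp 0 h = 0 := by
  ext n
  rw [psComp, PowerSeries.coeff_mk]
  simp

noncomputable def psCompAlgHom (h : PowerSeries ℝ) (h0 : constantCoeff h = 0) :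
    PowerSeries ℝ →ₐ[ℝ] PowerSeries ℝ where
  toFun f := psComp f h
  map_one' := psComp_one h
  map_mul' a b := psComp_mul h0 a b
  map_zero' := psComp_zero h
  map_add' a b := psComp_add a b h
  commutes' r := by
    simp only [PowerSeries.algebraMap_apply, Algebra.algebraMap_self, RingHom.id_apply]
    exact psComp_C r h

lemma psComp_assoc {g h : PowerSeries ℝ} (hg0 : constantCoeff g = 0)
    (h0 : constantCoeff h = 0) (f : PowerSeries ℝ) :
    psComp (psComp f g) h = psComp f (psComp g h) := by
  have hgh0 : constantCoeff (psComp g h) = 0 := by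
    rw [← PowerSeries.coeff_zero_eq_constantCoeff_apply, coeff_zero_psComp,
      PowerSeries.coeff_zero_eq_constantCoeff_apply, hg0]
  have key : (psCompAlgHom h h0).comp (Polynomial.aeval g)
      = Polynomial.aeval (psComp g h) := by
    apply Polynomial.algHom_ext
    simp only [AlgHom.coe_comp, Function.comp_apply, Polynomial.aeval_X]
    rfl
  ext n
  rw [psComp_aeval hgh0 f (Nat.lt_succ_self n), ← key]
  simp only [AlgHom.coe_comp, Function.comp_apply]
  show PowerSeries.coeff n (psComp (psComp f g) h)
      = PowerSeries.coeff n (psComp (Polynomial.aeval g (PowerSeries.trunc (n+1) f)) h)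
  rw [coeff_psComp h0, coeff_psComp h0]
  refine Finset.sum_congr rfl fun k hk => ?_
  rw [psComp_aeval hg0 f (show k < n + 1 by simpa using hk)]

lemma eq_of_coeff_mul_pow {W A F : PowerSeries ℝ} (hF : constantCoeff F = 1)
    (h : ∀ n, PowerSeries.coeff n ((W - A) * F ^ (n + 1)) = 0) : W = A := by
  rw [← sub_eq_zero]
  ext n
  induction n using Nat.strong_induction_on with
  | _ n ih =>
    have hn := h n
    rw [PowerSeries.coeff_mul, Finset.sum_eq_single (n, 0)] at hn
    · have hc : PowerSeries.coeff 0 (F ^ (n + 1)) = 1 := by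
        rw [PowerSeries.coeff_zero_eq_constantCoeff_apply, map_pow, hF, one_pow]
      rw [hc, mul_one] at hn
      simpa using hn
    · intro p hp hne
      have hpe := Finset.HasAntidiagonal.mem_antidiagonal.mp hp
      have hlt : p.1 < n := by
        rcases Nat.lt_or_ge p.1 n with h1 | h1
        · exact h1
        · exfalso; apply hne
          have : p.1 = n := le_antisymm (by omega) h1
          have : p.2 = 0 := by omega
          exact Prod.ext (by omega) this
      rw [ih p.1 hlt]
      simp
    · intro hn'
      exfalso; exact hn' (Finset.HasAntidiagonal.mem_antidiagonal.mpr (by omega))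

lemma coeff_pow_congr {a b : PowerSeries ℝ} (ha : constantCoeff a = 0)
    (hb : constantCoeff b = 0) {n : ℕ}
    (hab : ∀ m < n, PowerSeries.coeff m a = PowerSeries.coeff m b)
    {k : ℕ} (hk : 2 ≤ k) : PowerSeries.coeff n (a ^ k) = PowerSeries.coeff n (b ^ k) := by
  have hdvd : (PowerSeries.X : PowerSeries ℝ) ^ (n + 1) ∣ a ^ k - b ^ k := by
    rw [← geom_sum₂_mul]
    rw [pow_succ']
    apply mul_dvd_mul
    · apply Finset.dvd_sum
      intro i hi
      rcases Nat.eq_zero_or_pos i with rfl | hi0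
      · simp only [pow_zero, one_mul]
        exact dvd_pow (PowerSeries.X_dvd_iff.mpr hb) (by omega)
      · exact Dvd.dvd.mul_right (dvd_pow (PowerSeries.X_dvd_iff.mpr ha) (by omega)) _
    · rw [PowerSeries.X_pow_dvd_iff]
      intro m hm
      rw [map_sub, hab m hm, sub_self]
  have := PowerSeries.X_pow_dvd_iff.mp hdvd n (Nat.lt_succ_self n)
  rw [map_sub, sub_eq_zero] at this
  exact this

lemma psComp_inj {H a b : PowerSeries ℝ} (H1 : PowerSeries.coeff 1 H = 1)
    (ha : constantCoeff a = 0) (hb : constantCoeff b = 0)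
    (hab : psComp H a = psComp H b) : a = b := by
  ext n
  induction n using Nat.strong_induction_on with
  | _ n ih =>
    cases n with
    | zero => simp [ha, hb]
    | succ m =>
      have hc := congrArg (PowerSeries.coeff (m + 1)) hab
      rw [psComp, psComp, PowerSeries.coeff_mk, PowerSeries.coeff_mk] at hc
      have hterm : ∀ k ∈ Finset.range (m + 2), k ≠ 1 →
          PowerSeries.coeff (m+1) (a ^ k) = PowerSeries.coeff (m+1) (b ^ k) := by
        intro k _ hk1
        rcases Nat.eq_zero_or_pos k with rfl | hk0
        · simp
        · exact coeff_pow_congr ha hb (fun j hj => ih j hj) (by omega)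
      have hsum : ∑ k ∈ Finset.range (m + 2), PowerSeries.coeff k H *
          (PowerSeries.coeff (m+1) (a ^ k) - PowerSeries.coeff (m+1) (b ^ k)) = 0 := by
        simp only [mul_sub]
        rw [Finset.sum_sub_distrib, hc, sub_self]
      rw [Finset.sum_eq_single 1] at hsum
      · rw [H1, one_mul, sub_eq_zero, pow_one, pow_one] at hsum
        exact hsum
      · intro k hk hk1
        rw [hterm k hk hk1, sub_self, mul_zero]
      · intro h1
        exfalso; exact h1 (Finset.mem_range.mpr (by omega))

end LagAux

namespace LagAux

lemma residue_lemma {F φ : PowerSeries ℝ} (hFφ : F * φ = PowerSeries.X)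
    (hφ0 : constantCoeff φ = 0) (t : ℕ) :
    PowerSeries.coeff t (F ^ (t + 1) * d⁄dX ℝ φ) = if t = 0 then 1 else 0 := by
  have hD : F * d⁄dX ℝ φ = 1 - φ * d⁄dX ℝ F := by
    have h1 := congrArg (d⁄dX ℝ) hFφ
    rw [Derivation.leibniz, PowerSeries.derivative_X, smul_eq_mul, smul_eq_mul] at h1
    linear_combination h1
  cases t with
  | zero =>
    rw [pow_one, hD, if_pos rfl, PowerSeries.coeff_zero_eq_constantCoeff_apply,
      map_sub, map_mul, hφ0]
    simp
  | succ s =>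
    rw [if_neg (Nat.succ_ne_zero s)]
    have key : F ^ (s + 2) * d⁄dX ℝ φ = F ^ (s + 1) - PowerSeries.X * (F ^ s * d⁄dX ℝ F) := by
      have h1 : F ^ (s + 2) * d⁄dX ℝ φ = F ^ (s + 1) * (F * d⁄dX ℝ φ) := by ring
      rw [h1, hD, mul_sub, mul_one]
      congr 1
      have h2 : F ^ (s + 1) * (φ * d⁄dX ℝ F) = (F * φ) * (F ^ s * d⁄dX ℝ F) := by ring
      rw [h2, hFφ]
    rw [key, map_sub, PowerSeries.coeff_succ_X_mul]
    have hpow : PowerSeries.coeff s (F ^ s * d⁄dX ℝ F)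
        = PowerSeries.coeff (s + 1) (F ^ (s + 1)) := by
      have hl := Derivation.leibniz_pow (d⁄dX ℝ) (a := F) (s + 1)
      have hc := congrArg (PowerSeries.coeff s) hl
      rw [PowerSeries.coeff_derivative, map_nsmul] at hc
      simp only [Nat.add_sub_cancel, smul_eq_mul, nsmul_eq_mul,
        Nat.cast_add, Nat.cast_one] at hc
      have hcast : ((s : ℝ) + 1) ≠ 0 := by positivity
      apply mul_left_cancel₀ hcast
      linarith [hc]
    rw [hpow, sub_self]

end LagAux

namespace LagAux

lemma coeff_W_mul_pow {F φ : PowerSeries ℝ} (hFφ : F * φ = PowerSeries.X)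
    (hφ0 : constantCoeff φ = 0) (Q : PowerSeries ℝ) (n : ℕ) :
    PowerSeries.coeff n ((psComp Q φ * d⁄dX ℝ φ) * F ^ (n + 1)) =
      PowerSeries.coeff n Q := by
  rw [mul_assoc, coeff_psComp_mul hφ0 Q (d⁄dX ℝ φ * F ^ (n + 1)) n]
  rw [Finset.sum_eq_single n]
  · have hXk : φ ^ n * F ^ n = PowerSeries.X ^ n := by rw [← mul_pow, mul_comm φ F, hFφ]
    have hsplit : F ^ (n + 1) = F ^ n * F ^ 1 := by rw [← pow_add]
    have heq : φ ^ n * (d⁄dX ℝ φ * F ^ (n + 1))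
        = PowerSeries.X ^ n * (F ^ 1 * d⁄dX ℝ φ) := by
      rw [hsplit, ← hXk]; ring
    rw [heq]
    have hc := PowerSeries.coeff_X_pow_mul (F ^ 1 * d⁄dX ℝ φ) n 0
    rw [zero_add] at hc
    rw [hc]
    have hr := residue_lemma hFφ hφ0 0
    rw [pow_one] at hr ⊢
    rw [hr, if_pos rfl, mul_one]
  · intro k hk hkn
    have hk' : k < n := by
      simp only [Finset.mem_range] at hk; omega
    have hXk : φ ^ k * F ^ k = PowerSeries.X ^ k := by rw [← mul_pow, mul_comm φ F, hFφ]
    have hsplit : F ^ (n + 1) = F ^ k * F ^ (n - k + 1) := by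
      rw [← pow_add]; congr 1; omega
    have heq : φ ^ k * (d⁄dX ℝ φ * F ^ (n + 1))
        = PowerSeries.X ^ k * (F ^ (n - k + 1) * d⁄dX ℝ φ) := by
      rw [hsplit, ← hXk]; ring
    rw [heq]
    have hc := PowerSeries.coeff_X_pow_mul (F ^ (n - k + 1) * d⁄dX ℝ φ) k (n - k)
    rw [show n - k + k = n by omega] at hc
    rw [hc, residue_lemma hFφ hφ0 (n - k), if_neg (by omega), mul_zero]
  · intro hn
    exfalso; exact hn (Finset.mem_range.mpr (Nat.lt_succ_self n))

end LagAux


open LagAux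

/-- Lagrange-inversion formula recovering the data `c_a` from the moments
`p(k)`.  Here `g(z) = Σ_{a≥1} c_a z^{a−1}/(a−1)!`, the moment
`p(k) = [z^{-1}] f(z)^{k+1}/((k+1)(1+z))` for `f(z) = (1+z)(1/z + g(z))` — i.e.
the coefficient of `z^k` in `((1+z)(1+z g(z)))^{k+1}(1+z)^{-1}/(k+1)` — and
`G(u) = Σ_{k≥0} p(k)/u^{k+1} = H(1/u)` with `H(v) = Σ_k p(k) v^{k+1}`.  The
inversion `Σ_a c_a z^{a-1}/(a-1)! = (1+z)^{-1} G^{(-1)}(u)|_{u=log(1+z)} − 1/z`,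
with `G^{(-1)} = 1/H^{(-1)}`, is stated in the cleared-denominator form
`(1 + z g(z)) (1+z) H^{(-1)}(log(1+z)) = z`. -/
theorem lagrange_inversion_of_moments
    (c : ℕ → ℝ)
    (hconv : ∃ r : ℝ, 0 < r ∧ Summable fun a : ℕ => |c (a + 1)| * r ^ a / (Nat.factorial a : ℝ))
    (g : PowerSeries ℝ) (hg : g = PowerSeries.mk fun m => c (m + 1) / (Nat.factorial m : ℝ))
    (p : ℕ → ℝ)
    (hp : ∀ k : ℕ, p k =
      (PowerSeries.coeff k)
        (((1 + PowerSeries.X) * (1 + PowerSeries.X * g)) ^ (k + 1) *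
          (1 + PowerSeries.X)⁻¹) / ((k : ℝ) + 1))
    (H : PowerSeries ℝ)
    (hH : H = PowerSeries.mk fun m => if m = 0 then 0 else p (m - 1))
    (Hinv : PowerSeries ℝ)
    (hinv0 : PowerSeries.constantCoeff Hinv = 0)
    (hinv : psComp H Hinv = PowerSeries.X) :
    (1 + PowerSeries.X * g) * (1 + PowerSeries.X) * psComp Hinv logOnePlus =
      PowerSeries.X := by
  classical
  set F : PowerSeries ℝ := (1 + PowerSeries.X) * (1 + PowerSeries.X * g) with hF
  set A : PowerSeries ℝ := (1 + PowerSeries.X)⁻¹ with hA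
  have hF0 : constantCoeff F = 1 := by
    rw [hF, map_mul, map_add, map_add, map_mul]
    simp
  have h1X : constantCoeff (1 + PowerSeries.X : PowerSeries ℝ) = 1 := by simp
  have hA1 : (1 + PowerSeries.X) * A = 1 :=
    PowerSeries.mul_inv_cancel _ (by rw [h1X]; exact one_ne_zero)
  have hArec : A = 1 - PowerSeries.X * A := by linear_combination hA1
  have hAc : ∀ n, PowerSeries.coeff n A = (-1) ^ n := by
    intro n
    induction n with
    | zero =>
      rw [PowerSeries.coeff_zero_eq_constantCoeff_apply, hA, PowerSeries.constantCoeff_inv, h1X]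
      norm_num
    | succ m ih =>
      have hc := congrArg (PowerSeries.coeff (m + 1)) hArec
      rw [map_sub, PowerSeries.coeff_succ_X_mul, ih, PowerSeries.coeff_one,
        if_neg (Nat.succ_ne_zero m)] at hc
      rw [hc, pow_succ]
      ring
  have hFne : constantCoeff F ≠ 0 := by rw [hF0]; exact one_ne_zero
  set φ : PowerSeries ℝ := PowerSeries.X * F⁻¹ with hφ
  have hFφ : F * φ = PowerSeries.X := by
    rw [hφ, ← mul_assoc, mul_comm F PowerSeries.X, mul_assoc,
      PowerSeries.mul_inv_cancel F hFne, mul_one]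
  have hφ0 : constantCoeff φ = 0 := by
    rw [hφ, map_mul, PowerSeries.constantCoeff_X, zero_mul]
  set Q : PowerSeries ℝ := PowerSeries.mk (fun k => ((k : ℝ) + 1) * p k) with hQ
  have hq : ∀ k, PowerSeries.coeff k Q = PowerSeries.coeff k (F ^ (k + 1) * A) := by
    intro k
    have hk1 : ((k : ℝ) + 1) ≠ 0 := by positivity
    rw [hQ, PowerSeries.coeff_mk, hp k, mul_comm, div_mul_cancel₀ _ hk1]
  have hW : psComp Q φ * d⁄dX ℝ φ = A := by
    apply eq_of_coeff_mul_pow hF0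
    intro n
    rw [sub_mul, map_sub, coeff_W_mul_pow hFφ hφ0 Q n, hq n, mul_comm A (F ^ (n + 1)), sub_self]
  have hHc : ∀ m, PowerSeries.coeff m H = if m = 0 then 0 else p (m - 1) := by
    intro m; rw [hH, PowerSeries.coeff_mk]
  have hL0 : constantCoeff logOnePlus = 0 := by
    rw [← PowerSeries.coeff_zero_eq_constantCoeff_apply, logOnePlus, PowerSeries.coeff_mk,
      if_pos rfl]
  have hHφ : psComp H φ = logOnePlus := by
    ext n
    cases n with
    | zero =>
      rw [coeff_zero_psComp, hHc 0, if_pos rfl, logOnePlus, PowerSeries.coeff_mk, if_pos rfl]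
    | succ m =>
      have hmul : ((m : ℝ) + 1) ≠ 0 := by positivity
      apply mul_left_cancel₀ hmul
      have lhs : ((m : ℝ) + 1) * PowerSeries.coeff (m + 1) (psComp H φ)
          = PowerSeries.coeff m (psComp Q φ * d⁄dX ℝ φ) := by
        rw [coeff_psComp hφ0 H (m + 1), coeff_psComp_mul hφ0 Q (d⁄dX ℝ φ) m, Finset.mul_sum]
        rw [Finset.sum_range_succ'
          (fun k => ((m : ℝ) + 1) * (PowerSeries.coeff k H * PowerSeries.coeff (m+1) (φ ^ k)))]
        have hH0 : PowerSeries.coeff 0 H = 0 := by rw [hHc 0, if_pos rfl]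
        rw [hH0]
        simp only [zero_mul, mul_zero, add_zero]
        refine Finset.sum_congr rfl fun j hj => ?_
        have hd := Derivation.leibniz_pow (d⁄dX ℝ) (a := φ) (j + 1)
        have hcd := congrArg (PowerSeries.coeff m) hd
        rw [PowerSeries.coeff_derivative, map_nsmul] at hcd
        simp only [Nat.add_sub_cancel, smul_eq_mul, nsmul_eq_mul, Nat.cast_add,
          Nat.cast_one] at hcd
        rw [hHc (j + 1), if_neg (Nat.succ_ne_zero j), Nat.add_sub_cancel, hQ,
          PowerSeries.coeff_mk]
        linear_combination (p j) * hcd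
      rw [lhs, hW, hAc m, logOnePlus, PowerSeries.coeff_mk, if_neg (Nat.succ_ne_zero m)]
      push_cast
      rw [mul_div_assoc', mul_comm, mul_div_assoc, div_self hmul, mul_one, pow_succ, pow_succ]
      ring
  have hH1 : PowerSeries.coeff 1 H = 1 := by
    rw [hHc 1, if_neg one_ne_zero]
    rw [hp 0]
    have : PowerSeries.coeff 0 (F ^ (0 + 1) * A) = 1 := by
      rw [pow_one, PowerSeries.coeff_zero_eq_constantCoeff_apply, map_mul, hF0, one_mul, hA,
        PowerSeries.constantCoeff_inv, h1X]
      norm_num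
    rw [this]
    norm_num
  have hψ0 : constantCoeff (psComp Hinv logOnePlus) = 0 := by
    rw [← PowerSeries.coeff_zero_eq_constantCoeff_apply, coeff_zero_psComp,
      PowerSeries.coeff_zero_eq_constantCoeff_apply, hinv0]
  have hassoc := psComp_assoc hinv0 hL0 H
  rw [hinv, psComp_X hL0] at hassoc
  have hfin : psComp Hinv logOnePlus = φ :=
    psComp_inj hH1 hψ0 hφ0 (hassoc.symm.trans hHφ.symm)
  rw [hfin, hφ]
  have hring : (1 + PowerSeries.X * g) * (1 + PowerSeries.X) * (PowerSeries.X * F⁻¹)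
      = PowerSeries.X * (F * F⁻¹) := by
    rw [hF]; ring
  rw [hring, PowerSeries.mul_inv_cancel F hFne, mul_one]
end

section
/- Fix k ≥ 1. Expanding the moment functional: p(k) := [z^{-1}] (1/((k+1)(1+z))) · ((1+z)(1/z + Σ_{a=1}^∞ c_a z^{a-1}/(a−1)!))^{k+1}, viewed as a function of the variables c_1, c_2, …, is a polynomial that depends only on c_1,…,c_k, and the dependence on c_k is linear with a nonzero coefficient. -/
open PowerSeries

private lemma mom_pow_expand {R : Type*} [CommRing R] (a b : R) (n : ℕ) :
    ∃ r : R, (a + b) ^ n = a ^ n + (n : R) * a ^ (n - 1) * b + b ^ 2 * r := by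
  induction n with
  | zero => exact ⟨0, by simp⟩
  | succ n ih =>
    obtain ⟨r, hr⟩ := ih
    cases n with
    | zero => exact ⟨0, by ring_nf⟩
    | succ m =>
      refine ⟨((m : R) + 1) * a ^ m + r * (a + b), ?_⟩
      rw [pow_succ, hr]
      have h1 : m + 1 - 1 = m := rfl
      have h2 : m + 1 + 1 - 1 = m + 1 := rfl
      rw [h1, h2]
      push_cast
      ring

private lemma mom_coeff_zero_of_dvd {R : Type*} [CommRing R] {n m : ℕ} {f : R⟦X⟧}
    (h : (X : R⟦X⟧) ^ n ∣ f) (hm : m < n) : coeff m f = 0 :=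
  PowerSeries.X_pow_dvd_iff.mp h m hm

private lemma mom_inv_one_add_X :
    ((1 + X : ℝ⟦X⟧))⁻¹ = PowerSeries.mk fun n => (-1 : ℝ) ^ n := by
  rw [eq_comm, PowerSeries.eq_inv_iff_mul_eq_one (by simp)]
  ext n
  rw [mul_add, mul_one, map_add, mul_comm _ X]
  cases n with
  | zero => simp
  | succ n => rw [coeff_succ_X_mul]; simp [pow_succ]

/-- Fix `k ≥ 1`.  The moment
`p(k) = [z^{-1}] (1/((k+1)(1+z))) ((1+z)(1/z + Σ_{a≥1} c_a z^{a-1}/(a-1)!))^{k+1}`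
— i.e. the coefficient of `z^k` in
`((1+z)(1 + z Σ_{a≥1} c_a z^{a-1}/(a-1)!))^{k+1} (1+z)^{-1} / (k+1)` —
viewed as a function of `c₁, c₂, …`, is a polynomial depending only on
`c₁,…,c_k`, and the dependence on `c_k` is linear with a nonzero coefficient. -/
theorem moment_polynomial_in_c (k : ℕ) (hk : 1 ≤ k)
    (P : (ℕ → ℝ) → ℝ)
    (hP : ∀ c : ℕ → ℝ, P c =
      (PowerSeries.coeff (R := ℝ) k)
        (((1 + PowerSeries.X) *
            (1 + PowerSeries.X *
              PowerSeries.mk fun m => c (m + 1) / (Nat.factorial m : ℝ))) ^ (k + 1) *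
          (1 + PowerSeries.X)⁻¹) / ((k : ℝ) + 1)) :
    (∃ Q : MvPolynomial (Fin k) ℝ, ∀ c : ℕ → ℝ,
        P c = MvPolynomial.eval (fun i : Fin k => c ((i : ℕ) + 1)) Q) ∧
    ∃ α : ℝ, α ≠ 0 ∧ ∀ (c : ℕ → ℝ) (t : ℝ),
        P (Function.update c k t) = P (Function.update c k 0) + α * t := by
  have hPA : ∀ c : ℕ → ℝ, P c = (coeff (R := ℝ) k)
      (((1 + X) * (1 + X * PowerSeries.mk fun m => c (m + 1) / (Nat.factorial m : ℝ))) ^ (k + 1) *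
        (1 + X)⁻¹) / ((k : ℝ) + 1) := hP
  have hk1 : ((k : ℝ) + 1) ≠ 0 := by positivity
  -- L1 : only c₁,…,c_k matter
  have L1 : ∀ c c' : ℕ → ℝ, (∀ m, m < k → c (m + 1) = c' (m + 1)) → P c = P c' := by
    intro c c' hcc
    set Ac := (1 + X) * (1 + X * PowerSeries.mk fun m => c (m + 1) / (Nat.factorial m : ℝ))
      with hAc
    set Ac' := (1 + X) * (1 + X * PowerSeries.mk fun m => c' (m + 1) / (Nat.factorial m : ℝ))
      with hAc'
    have hdvd : (X : ℝ⟦X⟧) ^ (k + 1) ∣ Ac - Ac' := by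
      have h1 : Ac - Ac' =
          (1 + X) * X * ((PowerSeries.mk fun m => c (m + 1) / (Nat.factorial m : ℝ)) -
            PowerSeries.mk fun m => c' (m + 1) / (Nat.factorial m : ℝ)) := by
        rw [hAc, hAc']; ring
      have h2 : (X : ℝ⟦X⟧) ^ k ∣
          ((PowerSeries.mk fun m => c (m + 1) / (Nat.factorial m : ℝ)) -
            PowerSeries.mk fun m => c' (m + 1) / (Nat.factorial m : ℝ)) := by
        rw [PowerSeries.X_pow_dvd_iff]
        intro m hm
        simp [coeff_mk, hcc m hm]
      obtain ⟨d, hd⟩ := h2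
      refine ⟨(1 + X) * d, ?_⟩
      rw [h1, hd]; ring
    have hdvd2 : (X : ℝ⟦X⟧) ^ (k + 1) ∣ (Ac ^ (k + 1) - Ac' ^ (k + 1)) * (1 + X)⁻¹ :=
      ((hdvd.trans (sub_dvd_pow_sub_pow _ _ _)).mul_right _)
    have h0 : (coeff (R := ℝ) k) ((Ac ^ (k + 1) - Ac' ^ (k + 1)) * (1 + X)⁻¹) = 0 :=
      mom_coeff_zero_of_dvd hdvd2 (Nat.lt_succ_self k)
    rw [sub_mul, map_sub, sub_eq_zero] at h0
    rw [hPA, hPA, ← hAc, ← hAc', h0]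
  constructor
  · -- Part 1: polynomiality
    classical
    set Sg : (MvPolynomial (Fin k) ℝ)⟦X⟧ := PowerSeries.mk fun m =>
      if h : m < k then MvPolynomial.C (1 / (Nat.factorial m : ℝ)) * MvPolynomial.X ⟨m, h⟩
      else 0 with hSg
    set Jg : (MvPolynomial (Fin k) ℝ)⟦X⟧ := PowerSeries.mk fun n =>
      (-1 : MvPolynomial (Fin k) ℝ) ^ n with hJg
    set G : (MvPolynomial (Fin k) ℝ)⟦X⟧ := ((1 + X) * (1 + X * Sg)) ^ (k + 1) * Jg with hG
    refine ⟨MvPolynomial.C (((k : ℝ) + 1)⁻¹) * PowerSeries.coeff k G, ?_⟩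
    intro c
    set φ : MvPolynomial (Fin k) ℝ →+* ℝ :=
      MvPolynomial.eval fun i : Fin k => c ((i : ℕ) + 1) with hφ
    set c'' : ℕ → ℝ := fun i => if i ≤ k then c i else 0 with hc''
    have hmapG : PowerSeries.map φ G =
        ((1 + X) * (1 + X * PowerSeries.mk fun m => c'' (m + 1) / (Nat.factorial m : ℝ))) ^
          (k + 1) * (1 + X)⁻¹ := by
      have hmapS : PowerSeries.map φ Sg =
          PowerSeries.mk fun m => c'' (m + 1) / (Nat.factorial m : ℝ) := by
        ext m
        rw [coeff_map, hSg, coeff_mk, coeff_mk]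
        by_cases h : m < k
        · simp only [h, dif_pos, map_mul, MvPolynomial.eval_C, MvPolynomial.eval_X, hφ]
          rw [hc'']
          simp only [show m + 1 ≤ k from by omega, if_pos]
          ring
        · simp only [h, dif_neg, map_zero]
          rw [hc'']
          simp only [show ¬(m + 1 ≤ k) from by omega, if_neg]
          simp
      have hmapJ : PowerSeries.map φ Jg = (1 + X : ℝ⟦X⟧)⁻¹ := by
        rw [mom_inv_one_add_X]
        ext n
        rw [coeff_map, hJg, coeff_mk, coeff_mk]
        simp
      rw [hG]
      simp only [map_mul, map_pow, map_add, map_one, PowerSeries.map_X, hmapS, hmapJ]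
    have hcc : P c = P c'' := by
      refine L1 c c'' fun m hm => ?_
      rw [hc'']
      simp only [show m + 1 ≤ k from by omega, if_pos]
    have hφC : φ (MvPolynomial.C (((k : ℝ) + 1)⁻¹)) = ((k : ℝ) + 1)⁻¹ := by
      simp [hφ]
    rw [hcc, hPA, map_mul φ, hφC,
      show φ ((PowerSeries.coeff k) G) = (coeff (R := ℝ) k) (PowerSeries.map φ G) from
        (PowerSeries.coeff_map φ k G).symm, hmapG]
    field_simp
  · -- Part 2: linearity in c_k
    obtain ⟨k', rfl⟩ : ∃ k', k = k' + 1 := ⟨k - 1, (Nat.sub_add_cancel hk).symm⟩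
    refine ⟨((Nat.factorial k' : ℝ))⁻¹, by positivity, ?_⟩
    intro c t
    set β : ℝ := t * ((Nat.factorial k' : ℝ))⁻¹ with hβ
    set b : ℝ⟦X⟧ := PowerSeries.C β * X ^ (k' + 1) * (1 + X) with hb
    set A0 : ℝ⟦X⟧ := (1 + X) *
      (1 + X * PowerSeries.mk fun m =>
        Function.update c (k' + 1) 0 (m + 1) / (Nat.factorial m : ℝ)) with hA0
    have hSt : (PowerSeries.mk fun m =>
          Function.update c (k' + 1) t (m + 1) / (Nat.factorial m : ℝ)) =
        (PowerSeries.mk fun m =>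
          Function.update c (k' + 1) 0 (m + 1) / (Nat.factorial m : ℝ)) +
          PowerSeries.C β * X ^ k' := by
      ext m
      rw [map_add, coeff_mk, coeff_mk, coeff_C_mul, coeff_X_pow]
      by_cases h : m = k'
      · subst h
        rw [Function.update_self, Function.update_self]
        simp [hβ, div_eq_mul_inv]
      · have hne : m + 1 ≠ k' + 1 := by omega
        rw [Function.update_of_ne hne, Function.update_of_ne hne]
        simp [h]
    have hAt : ((1 + X) * (1 + X * PowerSeries.mk fun m =>
        Function.update c (k' + 1) t (m + 1) / (Nat.factorial m : ℝ))) = A0 + b := by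
      rw [hSt, hA0, hb]
      ring
    obtain ⟨r, hr⟩ := mom_pow_expand A0 b (k' + 1 + 1)
    rw [show k' + 1 + 1 - 1 = k' + 1 from rfl] at hr
    have hcA0 : constantCoeff (R := ℝ) A0 = 1 := by
      rw [hA0]
      simp
    have h2 : (coeff (R := ℝ) (k' + 1)) (b ^ 2 * r * (1 + X)⁻¹) = 0 := by
      refine mom_coeff_zero_of_dvd (n := 2 * (k' + 1)) ?_ (by omega)
      have hdb : (X : ℝ⟦X⟧) ^ (2 * (k' + 1)) ∣ b ^ 2 := by
        rw [sq, two_mul, pow_add, hb]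
        exact mul_dvd_mul ((dvd_mul_left _ _).mul_right _) ((dvd_mul_left _ _).mul_right _)
      exact (hdb.mul_right _).mul_right _
    have h1 : (coeff (R := ℝ) (k' + 1)) (((k' + 1 + 1 : ℕ) : ℝ⟦X⟧) *
        A0 ^ (k' + 1) * b * (1 + X)⁻¹) = (((k' : ℝ) + 1) + 1) * β := by
      have hbi : ((k' + 1 + 1 : ℕ) : ℝ⟦X⟧) * A0 ^ (k' + 1) * b * (1 + X)⁻¹ =
          (((k' + 1 + 1 : ℕ) : ℝ⟦X⟧) * A0 ^ (k' + 1) * PowerSeries.C β) * X ^ (k' + 1) *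
            ((1 + X) * (1 + X)⁻¹) := by
        rw [hb]; ring
      rw [hbi, PowerSeries.mul_inv_cancel _ (by simp), mul_one]
      have := PowerSeries.coeff_mul_X_pow
        (((k' + 1 + 1 : ℕ) : ℝ⟦X⟧) * A0 ^ (k' + 1) * PowerSeries.C β) (k' + 1) 0
      rw [zero_add] at this
      rw [this, coeff_zero_eq_constantCoeff, map_mul, map_mul, map_pow, hcA0,
        PowerSeries.constantCoeff_C, map_natCast]
      push_cast
      ring
    have hmain : (coeff (R := ℝ) (k' + 1)) ((A0 + b) ^ (k' + 1 + 1) * (1 + X)⁻¹) =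
        (coeff (R := ℝ) (k' + 1)) (A0 ^ (k' + 1 + 1) * (1 + X)⁻¹) + (((k' : ℝ) + 1) + 1) * β := by
      rw [hr, add_mul, add_mul, map_add, map_add, h1, h2, add_zero]
    rw [hPA, hPA, hAt, ← hA0, hmain, add_div]
    push_cast
    congr 1
    rw [hβ]
    have hne : ((k' : ℝ) + 1 + 1) ≠ 0 := by positivity
    field_simp
end
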